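/- Let G be a graph, T ⊆ V(G) a terminal set, and ω : E(G) → ℚ⁺ an edge-weight function. Suppose e is an edge incident to a non-terminal vertex v of degree at least 3 such that ω(e) is at least the sum of the weights of the other edges incident to v. If S is a minimum-weight edge multiway cut for (G,T) containing e, then (S \ {e}) ∪ {f : f incident to v, f ≠ e} is also an edge multiway cut for (G,T) of weight at most that of S. In particular, there exists a minimum-weight edge multiway cut not containing e. -/

import Mathlib

/-- `S` is an edge multiway cut for `(G, T)`: after deleting the edges of `S`,
no two distinct terminals of `T` lie in the same connected component. -/
def EdgeMultiwayCut {V : Type*} (G : SimpleGraph V) (T : Set V) (S : Set (Sym2 V)) : Prop :=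
  ∀ t₁ ∈ T, ∀ t₂ ∈ T, t₁ ≠ t₂ → ¬ (G.deleteEdges S).Reachable t₁ t₂

/-- If the only edge of `H` incident to `v` is `e`, then any walk between vertices
distinct from `v` can be replaced by a walk avoiding `v` on all its edges. -/
lemma exists_walk_avoiding {V : Type*} (H : SimpleGraph V) (v : V) (e : Sym2 V)
    (hv : ∀ f ∈ H.edgeSet, v ∈ f → f = e) :
    ∀ n : ℕ, ∀ {a b : V}, a ≠ v → b ≠ v → ∀ p : H.Walk a b, p.length ≤ n →
      ∃ q : H.Walk a b, ∀ f ∈ q.edges, v ∉ f := by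
  intro n
  induction n with
  | zero =>
    intro a b ha hb p hp
    cases p with
    | nil => exact ⟨.nil, by simp⟩
    | cons h q => simp at hp
  | succ n ih =>
    intro a b ha hb p hp
    cases p with
    | nil => exact ⟨.nil, by simp⟩
    | cons h q =>
      rename_i c
      by_cases hc : c = v
      · subst hc
        cases q with
        | nil => exact absurd rfl hb
        | cons h2 q2 =>
          rename_i d
          have e1 : s(a, c) = e := hv _ (H.mem_edgeSet.mpr h) (by simp)
          have e2 : s(c, d) = e := hv _ (H.mem_edgeSet.mpr h2) (by simp)
          have had : a = d := by
            have := e1.trans e2.symm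
            rw [Sym2.eq_iff] at this
            rcases this with ⟨h1, _⟩ | ⟨h1, _⟩
            · exact absurd h1 ha
            · exact h1
          subst had
          refine ih ha hb q2 ?_
          simp only [SimpleGraph.Walk.length_cons] at hp
          omega
      · obtain ⟨q', hq'⟩ := ih hc hb q (by
          simp only [SimpleGraph.Walk.length_cons] at hp; omega)
        refine ⟨.cons h q', ?_⟩
        intro f hf
        simp only [SimpleGraph.Walk.edges_cons, List.mem_cons] at hf
        rcases hf with rfl | hf
        · simp only [Sym2.mem_iff]
          rintro (rfl | rfl)
          · exact ha rfl
          · exact hc rfl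
        · exact hq' f hf

/-- If `e` is an edge incident to a non-terminal vertex `v` of degree at least 3 whose
weight is at least the total weight of the other edges at `v`, and `S` is a minimum-weight
edge multiway cut containing `e`, then replacing `e` by the other edges incident to `v`
yields an edge multiway cut of no larger weight; in particular some minimum-weight edge
multiway cut avoids `e`. -/
theorem min_weight_cut_avoids_heavy_edge {V : Type*} [Fintype V]
    (G : SimpleGraph V) (T : Set V) (ω : Sym2 V → ℚ)
    (hω : ∀ f ∈ G.edgeSet, 0 < ω f)
    (v : V) (hvT : v ∉ T) (hdeg : 3 ≤ (G.neighborSet v).ncard)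
    (e : Sym2 V) (he : e ∈ G.incidenceSet v)
    (hwt : ∑ᶠ f ∈ (G.incidenceSet v \ {e}), ω f ≤ ω e)
    (S : Set (Sym2 V)) (hSE : S ⊆ G.edgeSet)
    (hcut : EdgeMultiwayCut G T S)
    (hmin : ∀ S' ⊆ G.edgeSet, EdgeMultiwayCut G T S' → ∑ᶠ f ∈ S, ω f ≤ ∑ᶠ f ∈ S', ω f)
    (heS : e ∈ S) :
    (EdgeMultiwayCut G T ((S \ {e}) ∪ (G.incidenceSet v \ {e})) ∧
      ∑ᶠ f ∈ ((S \ {e}) ∪ (G.incidenceSet v \ {e})), ω f ≤ ∑ᶠ f ∈ S, ω f) ∧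
    ∃ S'' : Set (Sym2 V), S'' ⊆ G.edgeSet ∧ EdgeMultiwayCut G T S'' ∧
      (∀ S' ⊆ G.edgeSet, EdgeMultiwayCut G T S' → ∑ᶠ f ∈ S'', ω f ≤ ∑ᶠ f ∈ S', ω f) ∧
      e ∉ S'' := by
  classical
  set A : Set (Sym2 V) := S \ {e} with hA
  set B : Set (Sym2 V) := G.incidenceSet v \ {e} with hB
  have hveq : v ∈ e := he.2
  have hBE : B ⊆ G.edgeSet := fun f hf => (G.incidenceSet_subset v) hf.1
  have hAE : A ⊆ G.edgeSet := fun f hf => hSE hf.1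
  have hUE : A ∪ B ⊆ G.edgeSet := Set.union_subset hAE hBE
  -- the only edge of the new deleted graph incident to `v` is `e`
  have hv : ∀ f ∈ (G.deleteEdges (A ∪ B)).edgeSet, v ∈ f → f = e := by
    intro f hf hvf
    rw [SimpleGraph.edgeSet_deleteEdges] at hf
    by_contra hne
    exact hf.2 (Or.inr ⟨⟨hf.1, hvf⟩, hne⟩)
  have hcut' : EdgeMultiwayCut G T (A ∪ B) := by
    intro t₁ ht₁ t₂ ht₂ hne hr
    obtain ⟨p⟩ := hr
    obtain ⟨q, hq⟩ := exists_walk_avoiding _ v e hv p.length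
      (fun h => hvT (h ▸ ht₁)) (fun h => hvT (h ▸ ht₂)) p le_rfl
    refine hcut t₁ ht₁ t₂ ht₂ hne ⟨q.transfer (G.deleteEdges S) ?_⟩
    intro f hf
    have hfH := q.edges_subset_edgeSet hf
    rw [SimpleGraph.edgeSet_deleteEdges] at hfH ⊢
    refine ⟨hfH.1, fun hfS => ?_⟩
    have hfe : f ≠ e := fun h => hq f hf (h ▸ hveq)
    exact hfH.2 (Or.inl ⟨hfS, hfe⟩)
  -- weights
  have hfinA : A.Finite := Set.toFinite A
  have hfinB : B.Finite := Set.toFinite B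
  have hfinU : (A ∪ B).Finite := Set.toFinite _
  have hfinS : S.Finite := Set.toFinite S
  have hsum : ∑ᶠ f ∈ A ∪ B, ω f ≤ ∑ᶠ f ∈ S, ω f := by
    rw [finsum_mem_eq_finite_toFinset_sum ω hfinU, finsum_mem_eq_finite_toFinset_sum ω hfinS]
    have hU : hfinU.toFinset = hfinA.toFinset ∪ hfinB.toFinset \ hfinA.toFinset := by
      ext f
      simp only [Set.Finite.mem_toFinset, Finset.mem_union, Finset.mem_sdiff,
        Set.mem_union]
      tauto
    have hS : hfinS.toFinset = insert e hfinA.toFinset := by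
      ext f
      simp [Set.Finite.mem_toFinset, hA]
      constructor
      · intro hf
        by_cases hfe : f = e
        · exact Or.inl hfe
        · exact Or.inr ⟨hf, hfe⟩
      · rintro (rfl | ⟨hf, _⟩) <;> [exact heS; exact hf]
    rw [hU, hS, Finset.sum_union (Finset.disjoint_sdiff), Finset.sum_insert (by
      rw [Set.Finite.mem_toFinset]; exact fun h => h.2 rfl)]
    rw [add_comm (ω e)]
    refine add_le_add le_rfl ?_
    calc ∑ f ∈ hfinB.toFinset \ hfinA.toFinset, ω f
        ≤ ∑ f ∈ hfinB.toFinset, ω f := by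
          refine Finset.sum_le_sum_of_subset_of_nonneg (Finset.sdiff_subset) ?_
          intro f hf _
          exact (hω f (hBE (hfinB.mem_toFinset.mp hf))).le
      _ = ∑ᶠ f ∈ B, ω f := (finsum_mem_eq_finite_toFinset_sum ω hfinB).symm
      _ ≤ ω e := hwt
  refine ⟨⟨hcut', hsum⟩, ⟨A ∪ B, hUE, hcut', ?_, ?_⟩⟩
  · intro S' h1 h2
    exact hsum.trans (hmin S' h1 h2)
  · rintro (h | h)
    · exact h.2 rfl
    · exact h.2 rfl
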